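/- Fix a finite field F_q, an integer N ≥ 1 and positive integers d_0,…,d_N. The number of (N+1)-tuples (f_0,…,f_N), where each f_i is a homogeneous polynomial of degree d_i in F_q[X,Y] (possibly zero), such that the f_i have no common zero in P^1 over an algebraic closure of F_q, equals (q^{N+1} − 1)·(q^{d_0+⋯+d_N} − q^{d_0+⋯+d_N − N}). -/

import Mathlib

set_option linter.unusedSectionVars false
set_option maxHeartbeats 1000000
namespace Stmt10
open Polynomial


lemma wb_cases (b : WithBot ℕ) : b = ⊥ ∨ ∃ n : ℕ, b = (n : WithBot ℕ) := by
  cases b with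
  | bot => exact Or.inl rfl
  | coe n => exact Or.inr ⟨n, by simp [Nat.cast_withBot]⟩

/-- decrement on `WithBot ℕ`, sending `⊥` and `0` to `⊥`. -/
def shift (b : WithBot ℕ) : WithBot ℕ :=
  WithBot.recBotCoe ⊥ (fun n => if n = 0 then ⊥ else ((n - 1 : ℕ) : WithBot ℕ)) b

@[simp] lemma shift_bot : shift ⊥ = ⊥ := rfl

@[simp] lemma shift_coe (n : ℕ) :
    shift (n : WithBot ℕ) = if n = 0 then ⊥ else ((n - 1 : ℕ) : WithBot ℕ) := by
  rw [Nat.cast_withBot]; rfl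

lemma coe_add_one (m : ℕ) : ((m : WithBot ℕ) + 1) = ((m + 1 : ℕ) : WithBot ℕ) := by
  push_cast; ring

lemma le_shift_iff (a b : WithBot ℕ) : a ≤ shift b ↔ a + 1 ≤ b := by
  rcases wb_cases a with rfl | ⟨m, rfl⟩
  · simp
  · rcases wb_cases b with rfl | ⟨n, rfl⟩
    · rw [shift_bot, le_bot_iff, coe_add_one]
      simp [Nat.cast_withBot]
    · rw [shift_coe, coe_add_one]
      split_ifs with h
      · subst h
        constructor
        · intro h; simp at h
        · intro h
          simp only [Nat.cast_withBot, WithBot.coe_le_coe] at h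
          omega
      · simp only [Nat.cast_withBot, WithBot.coe_le_coe]
        omega

lemma eq_shift_iff {a : WithBot ℕ} (ha : a ≠ ⊥) (b : WithBot ℕ) : a = shift b ↔ a + 1 = b := by
  rcases wb_cases a with rfl | ⟨m, rfl⟩
  · exact absurd rfl ha
  · rw [coe_add_one]
    rcases wb_cases b with rfl | ⟨n, rfl⟩
    · simp [Nat.cast_withBot]
    · rw [shift_coe]
      split_ifs with h
      · subst h
        simp only [Nat.cast_withBot, WithBot.coe_inj]
        constructor
        · intro h; simp at h
        · intro h; omega
      · simp only [Nat.cast_withBot, WithBot.coe_inj]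
        omega

lemma le_shift_iterate_iff (e : ℕ) (a b : WithBot ℕ) :
    a ≤ shift^[e] b ↔ a + (e : ℕ) ≤ b := by
  induction e generalizing b with
  | zero => simp
  | succ k ih =>
    rw [Function.iterate_succ_apply, ih (shift b), le_shift_iff]
    have : (a + (k:ℕ)) + 1 = a + ((k+1 : ℕ) : WithBot ℕ) := by push_cast; ring
    rw [this]

lemma eq_shift_iterate_iff (e : ℕ) {a : WithBot ℕ} (ha : a ≠ ⊥) (b : WithBot ℕ) :
    a = shift^[e] b ↔ a + (e : ℕ) = b := by
  induction e generalizing b with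
  | zero => simp
  | succ k ih =>
    rw [Function.iterate_succ_apply, ih (shift b), eq_shift_iff]
    · have : (a + (k:ℕ)) + 1 = a + ((k+1 : ℕ) : WithBot ℕ) := by push_cast; ring
      rw [this]
    · intro h
      rw [WithBot.add_eq_bot] at h
      rcases h with h | h
      · exact ha h
      · simp at h


lemma lt_coe_succ_iff (a : WithBot ℕ) (n : ℕ) :
    a < ((n + 1 : ℕ) : WithBot ℕ) ↔ a ≤ (n : WithBot ℕ) := by
  rcases wb_cases a with rfl | ⟨m, rfl⟩
  · simpa [Nat.cast_withBot] using WithBot.bot_lt_coe (n+1)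
  · simp only [Nat.cast_withBot, WithBot.coe_lt_coe, WithBot.coe_le_coe]
    omega

variable {F : Type*} [Field F] [Fintype F]

/-- polynomials of degree `< n` form a set of cardinality `q ^ n`. -/
lemma card_degLT (n : ℕ) :
    Nat.card {p : F[X] // p.degree < (n : WithBot ℕ)} = Fintype.card F ^ n := by
  have e1 : {p : F[X] // p.degree < (n : WithBot ℕ)} ≃ degreeLT F n :=
    Equiv.subtypeEquivRight (fun p => (mem_degreeLT).symm)
  rw [Nat.card_eq_of_bijective e1 e1.bijective,
    Nat.card_eq_of_bijective (degreeLTEquiv F n) (degreeLTEquiv F n).bijective,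
    Nat.card_pi]
  simp [Nat.card_eq_fintype_card]

lemma finite_degLT (n : ℕ) : Finite {p : F[X] // p.degree < (n : WithBot ℕ)} := by
  refine Nat.finite_of_card_ne_zero ?_
  rw [card_degLT]
  positivity

def bddP (b : WithBot ℕ) : Set F[X] := {p | p.degree ≤ b}
def lowP (b : WithBot ℕ) : Set F[X] := {p | p.degree ≤ b ∧ ¬(p.degree = b ∧ p ≠ 0)}

def cB (q : ℕ) : WithBot ℕ → ℕ := WithBot.recBotCoe 1 (fun n => q^(n+1))
def cL (q : ℕ) : WithBot ℕ → ℕ := WithBot.recBotCoe 1 (fun n => q^n)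

@[simp] lemma cB_bot (q : ℕ) : cB q ⊥ = 1 := rfl
@[simp] lemma cB_coe (q n : ℕ) : cB q (n : WithBot ℕ) = q^(n+1) := by
  rw [Nat.cast_withBot]; rfl
@[simp] lemma cL_bot (q : ℕ) : cL q ⊥ = 1 := rfl
@[simp] lemma cL_coe (q n : ℕ) : cL q (n : WithBot ℕ) = q^n := by
  rw [Nat.cast_withBot]; rfl

lemma bddP_bot : (bddP (F := F) ⊥) = {0} := by
  ext p; simp [bddP, degree_eq_bot]

lemma lowP_bot : (lowP (F := F) ⊥) = {0} := by
  ext p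
  simp only [lowP, Set.mem_setOf_eq, le_bot_iff, degree_eq_bot, Set.mem_singleton_iff]
  tauto

lemma lowP_coe (n : ℕ) : (lowP (F := F) (n : WithBot ℕ)) = {p | p.degree < (n : WithBot ℕ)} := by
  ext p
  simp only [lowP, Set.mem_setOf_eq]
  constructor
  · rintro ⟨h1, h2⟩
    rcases eq_or_ne p 0 with rfl | hp
    · simp only [degree_zero]
      exact (lt_of_le_of_lt bot_le (by exact_mod_cast WithBot.bot_lt_coe n)).trans_le le_rfl
    · rcases lt_or_eq_of_le h1 with h | h
      · exact h
      · exact absurd ⟨h, hp⟩ h2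
  · intro h
    refine ⟨le_of_lt h, ?_⟩
    rintro ⟨h1, -⟩
    exact absurd h1 (ne_of_lt h)

lemma card_bddP (b : WithBot ℕ) : Nat.card (bddP (F := F) b) = cB (Fintype.card F) b := by
  rcases wb_cases b with rfl | ⟨n, rfl⟩
  · rw [bddP_bot]; simp
  · have : (bddP (F := F) (n : WithBot ℕ)) = {p | p.degree < ((n+1 : ℕ) : WithBot ℕ)} := by
      ext p
      simp only [bddP, Set.mem_setOf_eq, lt_coe_succ_iff]
    rw [this, cB_coe]
    exact card_degLT (n+1)

lemma card_lowP (b : WithBot ℕ) : Nat.card (lowP (F := F) b) = cL (Fintype.card F) b := by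
  rcases wb_cases b with rfl | ⟨n, rfl⟩
  · rw [lowP_bot]; simp
  · rw [lowP_coe, cL_coe]
    exact card_degLT n

lemma finite_bddP (b : WithBot ℕ) : (bddP (F := F) b).Finite := by
  rcases wb_cases b with rfl | ⟨n, rfl⟩
  · rw [bddP_bot]; exact Set.finite_singleton 0
  · have : (bddP (F := F) (n : WithBot ℕ)) = {p | p.degree < ((n+1 : ℕ) : WithBot ℕ)} := by
      ext p; simp only [bddP, Set.mem_setOf_eq, lt_coe_succ_iff]
    rw [this]
    have : Finite ↥{p : F[X] | p.degree < ((n+1 : ℕ) : WithBot ℕ)} := finite_degLT (n+1)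
    exact Set.toFinite _

/-- tuples in a pi-set. -/
def piSub {ι : Type*} {α : Type*} (S : ι → Set α) :
    {f : ι → α // ∀ i, f i ∈ S i} ≃ Π i, S i where
  toFun f i := ⟨f.1 i, f.2 i⟩
  invFun g := ⟨fun i => (g i).1, fun i => (g i).2⟩
  left_inv _ := rfl
  right_inv _ := rfl

lemma card_piSet {ι : Type*} [Fintype ι] {α : Type*} (S : ι → Set α) :
    Nat.card {f : ι → α // ∀ i, f i ∈ S i} = ∏ i, Nat.card (S i) := by
  rw [Nat.card_eq_of_bijective (piSub S) (piSub S).bijective, Nat.card_pi]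

section GCD
variable {F : Type*} [Field F] [DecidableEq F]

lemma gcd_mem_span {ι : Type*} (s : Finset ι) (f : ι → F[X]) :
    s.gcd f ∈ Ideal.span (f '' s) := by
  classical
  induction s using Finset.induction_on with
  | empty => simp [Finset.gcd_empty]
  | insert a t hx ih =>
    rw [Finset.gcd_insert]
    have h1 : gcd (f a) (t.gcd f) ∈ Ideal.span {f a, t.gcd f} := by
      rw [← span_gcd]
      exact Ideal.subset_span rfl
    refine Ideal.span_le.mpr ?_ h1
    rintro x (rfl | rfl)
    · exact Ideal.subset_span ⟨a, Finset.mem_insert_self a t, rfl⟩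
    · refine Ideal.span_mono ?_ ih
      intro y ⟨b, hb, hy⟩
      exact ⟨b, Finset.mem_insert_of_mem hb, hy⟩

/-- if the gcd of a finite family is 1, there is no common root in any field extension -/
lemma no_common_root {ι : Type*} [Fintype ι] {f : ι → F[X]}
    (h : Finset.univ.gcd f = 1) {K : Type*} [Field K] (φ : F →+* K) (r : K) :
    ∃ i, ((f i).map φ).eval r ≠ 0 := by
  by_contra hc
  push_neg at hc
  have h1 : (1 : F[X]) ∈ Ideal.span (Set.range f) := by
    rw [← h]
    have := gcd_mem_span Finset.univ f
    simpa [Set.image_univ] using this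
  rw [Ideal.span, Submodule.mem_span_range_iff_exists_fun] at h1
  obtain ⟨c, hc1⟩ := h1
  have h2 := congrArg (fun p : F[X] => (p.map φ).eval r) hc1
  simp only [smul_eq_mul, Polynomial.map_sum, eval_finset_sum, Polynomial.map_mul, eval_mul,
    Polynomial.map_one, eval_one] at h2
  rw [Finset.sum_congr rfl (fun i _ => by rw [hc i, mul_zero])] at h2
  simp at h2
end GCD

section Monic
variable {F : Type*} [Field F] [Fintype F]

def MD (e : ℕ) : Set F[X] := {g | g.Monic ∧ g.natDegree = e}

lemma card_MD (e : ℕ) : Nat.card (MD (F := F) e) = Fintype.card F ^ e := by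
  have hmem : ∀ p : {p : F[X] // p.degree < (e : WithBot ℕ)}, X ^ e + p.1 ∈ MD (F := F) e := by
    intro p
    have hm : (X ^ e + p.1).Monic := monic_X_pow_add p.2
    refine ⟨hm, ?_⟩
    have : (X ^ e + p.1).degree = (e : WithBot ℕ) := by
      rw [degree_add_eq_left_of_degree_lt (by simpa [degree_X_pow] using p.2), degree_X_pow]
    exact natDegree_eq_of_degree_eq_some this
  have hb : Function.Bijective
      (fun p : {p : F[X] // p.degree < (e : WithBot ℕ)} =>
        (⟨X ^ e + p.1, hmem p⟩ : ↥(MD (F := F) e))) := by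
    constructor
    · rintro ⟨p, hp⟩ ⟨p', hp'⟩ h
      simp only [Subtype.mk.injEq, add_right_inj] at h
      exact Subtype.ext h
    · rintro ⟨g, hg, hge⟩
      have hgd : g.degree = (e : WithBot ℕ) := by
        rw [← hge, degree_eq_natDegree hg.ne_zero]
      have hdlt : (g - X ^ e).degree < (e : WithBot ℕ) := by
        rcases eq_or_ne (g - X ^ e) 0 with h0 | h0
        · rw [h0, degree_zero]
          exact WithBot.bot_lt_coe e
        · have h2 := degree_sub_lt (p := g) (q := X ^ e) (by simp [hgd]) hg.ne_zero
            (by simp [hg.leadingCoeff])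
          rwa [hgd] at h2
      exact ⟨⟨g - X ^ e, hdlt⟩, by simp⟩
  rw [← Nat.card_eq_of_bijective _ hb, card_degLT]

end Monic
section Stats
variable {ι : Type*} [Fintype ι]

def sD (d : ι → WithBot ℕ) : ℕ := ∑ i, (d i).unbotD 0
def sS (d : ι → WithBot ℕ) : ℕ := (Finset.univ.filter (fun i => d i ≠ ⊥)).card
def sT (d : ι → WithBot ℕ) : ℕ := (Finset.univ.filter (fun i => (1 : WithBot ℕ) ≤ d i)).card
def sZ (d : ι → WithBot ℕ) : ℕ := (Finset.univ.filter (fun i => d i = (0 : WithBot ℕ))).card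

/-- the counting formula -/
def ff (q : ℕ) (d : ι → WithBot ℕ) : ℕ :=
  (q ^ sZ d - 1) * q ^ (sD d + sT d) +
    (q ^ sT d - 1) * (q ^ sD d - q ^ (sD d - sT d + 1))

lemma one_le_iff (b : WithBot ℕ) : (1 : WithBot ℕ) ≤ b ↔ ∃ n : ℕ, b = (n : WithBot ℕ) ∧ 1 ≤ n := by
  rcases wb_cases b with rfl | ⟨n, rfl⟩
  · simp
  · rw [show (1 : WithBot ℕ) = ((1 : ℕ) : WithBot ℕ) by simp]
    simp only [Nat.cast_withBot, WithBot.coe_le_coe, WithBot.coe_inj]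
    constructor
    · intro h; exact ⟨n, rfl, h⟩
    · rintro ⟨m, rfl, h⟩; exact h

lemma coe_zero_eq : ((0 : ℕ) : WithBot ℕ) = (0 : WithBot ℕ) := by simp

lemma not_one_le_of_eq_zero {b : WithBot ℕ} (h : b = 0) : ¬((1 : WithBot ℕ) ≤ b) := by
  subst h
  rw [one_le_iff]
  rintro ⟨m, hm, h1⟩
  rw [← coe_zero_eq, Nat.cast_withBot, Nat.cast_withBot, WithBot.coe_inj] at hm
  omega

lemma ne_bot_iff (b : WithBot ℕ) : b ≠ ⊥ ↔ (b = 0 ∨ (1 : WithBot ℕ) ≤ b) := by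
  rcases wb_cases b with rfl | ⟨n, rfl⟩
  · simp only [ne_eq, not_true_eq_false, false_iff, not_or]
    constructor
    · rw [← coe_zero_eq]; simp
    · rw [one_le_iff]
      rintro ⟨m, hm, -⟩
      simp at hm
  · simp only [ne_eq, Nat.cast_withBot, WithBot.coe_ne_bot, not_false_eq_true, true_iff]
    rcases Nat.eq_zero_or_pos n with rfl | hn
    · exact Or.inl (by rw [← Nat.cast_withBot, coe_zero_eq])
    · exact Or.inr (by rw [one_le_iff]; exact ⟨n, by rw [Nat.cast_withBot], hn⟩)

lemma sZ_add_sT (d : ι → WithBot ℕ) : sZ d + sT d = sS d := by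
  classical
  rw [sZ, sT, sS, ← Finset.card_union_of_disjoint]
  · congr 1
    ext i
    simp only [Finset.mem_union, Finset.mem_filter, Finset.mem_univ, true_and]
    rw [ne_bot_iff]
  · rw [Finset.disjoint_left]
    intro i hi hi2
    rw [Finset.mem_filter] at hi hi2
    exact not_one_le_of_eq_zero hi.2 hi2.2

lemma one_le_unbot {b : WithBot ℕ} (h : (1 : WithBot ℕ) ≤ b) : 1 ≤ b.unbotD 0 := by
  rw [one_le_iff] at h
  obtain ⟨n, rfl, hn⟩ := h
  simpa [Nat.cast_withBot] using hn

lemma sT_le_sD (d : ι → WithBot ℕ) : sT d ≤ sD d := by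
  classical
  rw [sT, sD]
  calc (Finset.univ.filter (fun i => (1 : WithBot ℕ) ≤ d i)).card
      = ∑ i ∈ Finset.univ.filter (fun i => (1 : WithBot ℕ) ≤ d i), 1 := by
        simp
    _ ≤ ∑ i ∈ Finset.univ.filter (fun i => (1 : WithBot ℕ) ≤ d i), (d i).unbotD 0 := by
        apply Finset.sum_le_sum
        intro i hi
        exact one_le_unbot (Finset.mem_filter.mp hi).2
    _ ≤ ∑ i, (d i).unbotD 0 := by
        apply Finset.sum_le_sum_of_subset
        exact Finset.filter_subset _ _

lemma prod_cB (q : ℕ) (d : ι → WithBot ℕ) : ∏ i, cB q (d i) = q ^ (sD d + sS d) := by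
  classical
  have h : ∀ i, cB q (d i) = q ^ ((d i).unbotD 0 + if d i ≠ ⊥ then 1 else 0) := by
    intro i
    rcases wb_cases (d i) with h | ⟨n, h⟩
    · rw [h, cB_bot, WithBot.unbotD_bot, if_neg (by simp), add_zero, pow_zero]
    · rw [h, cB_coe, if_pos (by simp [Nat.cast_withBot]), Nat.cast_withBot, WithBot.unbotD_coe]
  rw [Finset.prod_congr rfl (fun i _ => h i), Finset.prod_pow_eq_pow_sum]
  congr 1
  rw [Finset.sum_add_distrib]
  congr 1
  rw [sS, Finset.card_filter]

lemma prod_cL (q : ℕ) (d : ι → WithBot ℕ) : ∏ i, cL q (d i) = q ^ sD d := by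
  have h : ∀ i, cL q (d i) = q ^ ((d i).unbotD 0) := by
    intro i
    rcases wb_cases (d i) with h | ⟨n, h⟩
    · rw [h, cL_bot]
      simp
    · rw [h, cL_coe, Nat.cast_withBot, WithBot.unbotD_coe]
  rw [Finset.prod_congr rfl (fun i _ => h i), Finset.prod_pow_eq_pow_sum, sD]

lemma shift_ne_bot_iff (b : WithBot ℕ) : shift b ≠ ⊥ ↔ (1 : WithBot ℕ) ≤ b := by
  rw [one_le_iff]
  rcases wb_cases b with rfl | ⟨n, rfl⟩
  · simp
  · rw [shift_coe]
    split_ifs with h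
    · subst h
      simp only [ne_eq, not_true_eq_false, false_iff, not_exists]
      rintro m ⟨hm, h1⟩
      rw [Nat.cast_withBot, Nat.cast_withBot, WithBot.coe_inj] at hm
      omega
    · simp only [ne_eq, Nat.cast_withBot, WithBot.coe_ne_bot, not_false_eq_true, true_iff]
      exact ⟨n, rfl, by omega⟩

lemma sS_shift (d : ι → WithBot ℕ) : sS (shift ∘ d) = sT d := by
  classical
  rw [sS, sT]
  congr 1
  ext i
  simp [shift_ne_bot_iff]

lemma unbot_shift (b : WithBot ℕ) :
    (shift b).unbotD 0 + (if (1 : WithBot ℕ) ≤ b then 1 else 0) = b.unbotD 0 := by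
  classical
  rcases wb_cases b with rfl | ⟨n, rfl⟩
  · simp only [shift_bot]
    rw [if_neg]
    · simp
    · rw [one_le_iff]; rintro ⟨m, hm, -⟩; simp at hm
  · rw [shift_coe]
    split_ifs with h h1 h2
    · subst h
      exfalso
      rw [one_le_iff] at h1
      obtain ⟨m, hm, hm1⟩ := h1
      rw [Nat.cast_withBot, Nat.cast_withBot, WithBot.coe_inj] at hm
      omega
    · subst h; simp [Nat.cast_withBot]
    · simp only [Nat.cast_withBot, WithBot.unbotD_coe]
      omega
    · exfalso
      apply h2
      rw [one_le_iff]
      exact ⟨n, rfl, by omega⟩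

lemma sD_shift (d : ι → WithBot ℕ) : sD (shift ∘ d) + sT d = sD d := by
  classical
  rw [sD, sD, sT, Finset.card_filter, ← Finset.sum_add_distrib]
  exact Finset.sum_congr rfl (fun i _ => unbot_shift (d i))

lemma num_arith {q : ℕ} (hq : 1 ≤ q) (z t a : ℕ) :
    (q ^ z - 1) * q ^ ((a + t) + t) + (q ^ t - 1) * (q ^ (a + t) - q ^ (a + 1)) +
      q * (q ^ (a + t) - q ^ a)
      = q ^ ((a + t) + (z + t)) - q ^ (a + t) := by
  rcases Nat.eq_zero_or_pos t with rfl | ht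
  · simp only [add_zero, pow_zero, Nat.sub_self, mul_zero, zero_mul, Nat.zero_sub,
      Nat.sub_self, mul_zero, add_zero]
    rw [Nat.sub_mul, one_mul, ← pow_add]
    ring_nf
  · have h1 : q ^ (a + 1) ≤ q ^ (a + t) := Nat.pow_le_pow_right hq (by omega)
    have h2 : q ^ a ≤ q ^ (a + t) := Nat.pow_le_pow_right hq (by omega)
    have h3 : 1 ≤ q ^ t := Nat.one_le_pow _ _ hq
    have h4 : 1 ≤ q ^ z := Nat.one_le_pow _ _ hq
    have h5 : q ^ (a + t) ≤ q ^ ((a + t) + (z + t)) := Nat.pow_le_pow_right hq (by omega)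
    zify [h1, h2, h3, h4, h5]
    ring

lemma le_coe_zero_cases {b : WithBot ℕ} (h : b ≤ ((0 : ℕ) : WithBot ℕ)) :
    b = ⊥ ∨ b = (0 : WithBot ℕ) := by
  rcases wb_cases b with rfl | ⟨n, rfl⟩
  · exact Or.inl rfl
  · rw [Nat.cast_withBot, Nat.cast_withBot, WithBot.coe_le_coe] at h
    interval_cases n
    exact Or.inr (by rw [← coe_zero_eq, Nat.cast_withBot])

lemma shift_le_of_le_succ {b : WithBot ℕ} {K : ℕ} (h : b ≤ ((K + 1 : ℕ) : WithBot ℕ)) :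
    shift b ≤ ((K : ℕ) : WithBot ℕ) := by
  rcases wb_cases b with rfl | ⟨n, rfl⟩
  · simp
  · rw [shift_coe]
    split_ifs with h0
    · simp
    · rw [Nat.cast_withBot, Nat.cast_withBot, WithBot.coe_le_coe] at h ⊢
      omega

lemma sT_eq_zero {d : ι → WithBot ℕ} (h : ∀ i, d i ≤ ((0 : ℕ) : WithBot ℕ)) : sT d = 0 := by
  rw [sT, Finset.card_eq_zero, Finset.filter_eq_empty_iff]
  intro i _
  rcases le_coe_zero_cases (h i) with h1 | h1
  · rw [h1]
    rw [one_le_iff]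
    rintro ⟨m, hm, -⟩
    simp at hm
  · exact not_one_le_of_eq_zero h1

lemma sD_eq_zero {d : ι → WithBot ℕ} (h : ∀ i, d i ≤ ((0 : ℕ) : WithBot ℕ)) : sD d = 0 := by
  rw [sD, Finset.sum_eq_zero]
  intro i _
  rcases le_coe_zero_cases (h i) with h1 | h1 <;> rw [h1] <;> simp

lemma NUM {q : ℕ} (hq : 1 ≤ q) :
    ∀ (K : ℕ) (d : ι → WithBot ℕ), (∀ i, d i ≤ ((K : ℕ) : WithBot ℕ)) →
      ∑ e ∈ Finset.range (K + 1), q ^ e * ff q (shift^[e] ∘ d)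
        = q ^ (sD d + sS d) - q ^ sD d := by
  intro K
  induction K with
  | zero =>
    intro d hd
    rw [Finset.sum_range_one]
    simp only [Function.iterate_zero, Function.comp_def, pow_zero, one_mul]
    rw [show (fun x => id (d x)) = d from rfl]
    have ht : sT d = 0 := sT_eq_zero hd
    have hD : sD d = 0 := sD_eq_zero hd
    have hz : sZ d = sS d := by have := sZ_add_sT d; omega
    rw [ff, ht, hD, hz]
    simp [Nat.one_le_pow _ _ hq]
  | succ K ih =>
    intro d hd
    rw [Finset.sum_range_succ']
    have hstep : ∀ e, shift^[e + 1] ∘ d = shift^[e] ∘ (shift ∘ d) := by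
      intro e
      funext i
      exact Function.iterate_succ_apply shift e (d i)
    have hsum : ∑ e ∈ Finset.range (K + 1), q ^ (e + 1) * ff q (shift^[e + 1] ∘ d)
        = q * ∑ e ∈ Finset.range (K + 1), q ^ e * ff q (shift^[e] ∘ (shift ∘ d)) := by
      rw [Finset.mul_sum]
      refine Finset.sum_congr rfl (fun e _ => ?_)
      rw [hstep e, pow_succ]
      ring
    rw [hsum, ih (shift ∘ d) (fun i => shift_le_of_le_succ (hd i))]
    simp only [Function.iterate_zero, Function.comp_def, pow_zero, one_mul]
    rw [show (fun x => id (d x)) = d from rfl,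
      show (fun x => shift (d x)) = shift ∘ d from rfl]
    have hDa : sD d = sD (shift ∘ d) + sT d := (sD_shift d).symm
    have hsS' : sS (shift ∘ d) = sT d := sS_shift d
    have hzs : sS d = sZ d + sT d := (sZ_add_sT d).symm
    set a := sD (shift ∘ d) with ha
    have key := num_arith hq (sZ d) (sT d) a
    rw [ff, hDa, hsS', hzs, show a + sT d - sT d + 1 = a + 1 from by omega]
    omega

end Stats

section Tuples
variable {F : Type*} [Field F] [Fintype F] [DecidableEq F]
  {ι : Type*} [Fintype ι] [Nonempty ι]

def CT (d : ι → WithBot ℕ) : Set (ι → F[X]) :=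
  {f | (∀ i, (f i).degree ≤ d i) ∧ (∃ i, (f i).degree = d i ∧ f i ≠ 0) ∧
    Finset.univ.gcd f = 1}

def BT (d : ι → WithBot ℕ) : Set (ι → F[X]) :=
  {f | (∀ i, (f i).degree ≤ d i) ∧ (∃ i, (f i).degree = d i ∧ f i ≠ 0)}

lemma finite_bddTuples (d : ι → WithBot ℕ) :
    ({f : ι → F[X] | ∀ i, (f i).degree ≤ d i}).Finite := by
  have h : {f : ι → F[X] | ∀ i, (f i).degree ≤ d i}
      = Set.pi Set.univ (fun i => bddP (d i)) := by
    ext f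
    simp [Set.mem_pi, bddP]
  rw [h]
  exact Set.Finite.pi (fun i => finite_bddP (d i))

lemma finite_BT (d : ι → WithBot ℕ) : (BT (F := F) d).Finite :=
  (finite_bddTuples d).subset (fun f hf => hf.1)

lemma finite_CT (d : ι → WithBot ℕ) : (CT (F := F) d).Finite :=
  (finite_bddTuples d).subset (fun f hf => hf.1)

instance instFinBT (d : ι → WithBot ℕ) : Finite ↥(BT (F := F) d) := (finite_BT d).to_subtype
instance instFinCT (d : ι → WithBot ℕ) : Finite ↥(CT (F := F) d) := (finite_CT d).to_subtype
instance instFinMD (e : ℕ) : Finite ↥(MD (F := F) e) := by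
  refine Set.Finite.to_subtype ((finite_bddP ((e : ℕ) : WithBot ℕ)).subset ?_)
  rintro g ⟨hg, rfl⟩
  exact degree_le_natDegree

lemma deg_mul_monic {g : F[X]} (hg : g.Monic) (h : F[X]) :
    (g * h).degree = h.degree + ((g.natDegree : ℕ) : WithBot ℕ) := by
  rw [degree_mul, degree_eq_natDegree hg.ne_zero, add_comm]

lemma nat_card_sigma {n : ℕ} (A : Fin n → Type*) [ha : ∀ i, Finite (A i)] :
    Nat.card (Σ i, A i) = ∑ i, Nat.card (A i) := by
  letI : ∀ i, Fintype (A i) := fun i => Fintype.ofFinite _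
  rw [Nat.card_eq_fintype_card, Fintype.card_sigma]
  exact Finset.sum_congr rfl fun i _ => (Nat.card_eq_fintype_card).symm

lemma gcd_mul_tuple (g : F[X]) (hg : g.Monic) (h : ι → F[X])
    (hh : Finset.univ.gcd h = 1) : Finset.univ.gcd (fun i => g * h i) = g := by
  rw [Finset.gcd_mul_left, hh, mul_one, hg.normalize_eq_self]

/-- the key partition identity -/
lemma card_BT_eq (d : ι → WithBot ℕ) (K : ℕ) (hK : ∀ i, d i ≤ ((K : ℕ) : WithBot ℕ)) :
    Nat.card (BT (F := F) d)
      = ∑ e ∈ Finset.range (K + 1),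
          Fintype.card F ^ e * Nat.card (CT (F := F) (shift^[e] ∘ d)) := by
  classical
  -- the bijection
  have hmem : ∀ (e : Fin (K + 1)) (g : ↥(MD (F := F) (e : ℕ)))
      (h : ↥(CT (F := F) (shift^[(e : ℕ)] ∘ d))),
      (fun i => g.1 * h.1 i) ∈ BT (F := F) d := by
    rintro ⟨e, he⟩ ⟨g, hgm, hge⟩ ⟨h, hhb, ⟨i0, hi0d, hi0⟩, hgcd⟩
    constructor
    · intro i
      rw [deg_mul_monic hgm, hge, ← le_shift_iterate_iff]
      exact hhb i
    · refine ⟨i0, ?_, mul_ne_zero hgm.ne_zero hi0⟩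
      rw [deg_mul_monic hgm, hge]
      rw [← eq_shift_iterate_iff e (by rwa [ne_eq, degree_eq_bot]) (d i0)]
      exact hi0d
  set Φ : (Σ e : Fin (K + 1), (↥(MD (F := F) (e : ℕ)) × ↥(CT (F := F) (shift^[(e : ℕ)] ∘ d))))
      → ↥(BT (F := F) d) :=
    fun x => ⟨fun i => x.2.1.1 * x.2.2.1 i, hmem x.1 x.2.1 x.2.2⟩ with hΦ
  have hbij : Function.Bijective Φ := by
    constructor
    · rintro ⟨e, ⟨g, hgm, hge⟩, ⟨h, hh⟩⟩ ⟨e', ⟨g', hgm', hge'⟩, ⟨h', hh'⟩⟩ hEq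
      simp only [hΦ, Subtype.mk.injEq] at hEq
      have h1 : Finset.univ.gcd (fun i => g * h i) = g := gcd_mul_tuple g hgm h hh.2.2
      have h2 : Finset.univ.gcd (fun i => g' * h' i) = g' := gcd_mul_tuple g' hgm' h' hh'.2.2
      have hgg : g = g' := by rw [← h1, hEq, h2]
      have hee : e = e' := Fin.ext (by rw [← hge, ← hge', hgg])
      subst hee
      subst hgg
      have hhh : h = h' := funext fun i => mul_left_cancel₀ hgm.ne_zero (congrFun hEq i)
      subst hhh
      rfl
    · rintro ⟨f, hfb, ⟨i0, hfi0, hf0⟩⟩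
      set G := Finset.univ.gcd f with hG
      have hGne : G ≠ 0 := by
        intro h0
        rw [hG, Finset.gcd_eq_zero_iff] at h0
        exact hf0 (h0 i0 (Finset.mem_univ _))
      have hGmon : G.Monic := by
        have := monic_normalize hGne
        rwa [hG, Finset.normalize_gcd] at this
      have hdeg : G.degree ≤ d i0 :=
        le_trans (degree_le_of_dvd (Finset.gcd_dvd (Finset.mem_univ i0)) hf0) (hfb i0)
      have heK : G.natDegree ≤ K := by
        have h1 : ((G.natDegree : ℕ) : WithBot ℕ) ≤ ((K : ℕ) : WithBot ℕ) := by
          rw [← degree_eq_natDegree hGne]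
          exact le_trans hdeg (hK i0)
        rwa [Nat.cast_withBot, Nat.cast_withBot, WithBot.coe_le_coe] at h1
      obtain ⟨h, hfe, hgcd1⟩ := Finset.extract_gcd f Finset.univ_nonempty
      have hfeq : ∀ i, f i = G * h i := fun i => hfe i (Finset.mem_univ i)
      have hmemCT : h ∈ CT (F := F) (shift^[G.natDegree] ∘ d) := by
        refine ⟨?_, ⟨i0, ?_, ?_⟩, hgcd1⟩
        · intro i
          rw [Function.comp_apply, le_shift_iterate_iff]
          calc (h i).degree + ((G.natDegree : ℕ) : WithBot ℕ)
              = (G * h i).degree := (deg_mul_monic hGmon (h i)).symm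
            _ = (f i).degree := by rw [← hfeq i]
            _ ≤ d i := hfb i
        · have hne : h i0 ≠ 0 := by
            intro h0
            apply hf0
            rw [hfeq i0, h0, mul_zero]
          rw [Function.comp_apply,
            eq_shift_iterate_iff G.natDegree (by rwa [ne_eq, degree_eq_bot]) (d i0)]
          calc (h i0).degree + ((G.natDegree : ℕ) : WithBot ℕ)
              = (G * h i0).degree := (deg_mul_monic hGmon (h i0)).symm
            _ = (f i0).degree := by rw [← hfeq i0]
            _ = d i0 := hfi0
        · intro h0
          apply hf0
          rw [hfeq i0, h0, mul_zero]
      refine ⟨⟨⟨G.natDegree, by omega⟩, ⟨G, hGmon, rfl⟩, ⟨h, hmemCT⟩⟩, ?_⟩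
      apply Subtype.ext
      funext i
      exact (hfeq i).symm
  rw [← Nat.card_eq_of_bijective Φ hbij, nat_card_sigma]
  rw [← Fin.sum_univ_eq_sum_range
    (fun e => Fintype.card F ^ e * Nat.card (CT (F := F) (shift^[e] ∘ d))) (K + 1)]
  refine Finset.sum_congr rfl fun e _ => ?_
  rw [Nat.card_prod, card_MD]

end Tuples


section Main
variable {F : Type*} [Field F] [Fintype F] [DecidableEq F]
  {ι : Type*} [Fintype ι] [Nonempty ι]

lemma d_le_sD (d : ι → WithBot ℕ) (i : ι) : d i ≤ ((sD d : ℕ) : WithBot ℕ) := by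
  rcases wb_cases (d i) with h | ⟨n, h⟩
  · rw [h]; exact bot_le
  · rw [h, Nat.cast_withBot, Nat.cast_withBot, WithBot.coe_le_coe]
    have h1 : (d i).unbotD 0 = n := by rw [h]; simp [Nat.cast_withBot]
    calc n = (d i).unbotD 0 := h1.symm
      _ ≤ ∑ j, (d j).unbotD 0 :=
        Finset.single_le_sum (f := fun j => (d j).unbotD 0) (fun j _ => Nat.zero_le _)
          (Finset.mem_univ i)

lemma mu_shift_le (d : ι → WithBot ℕ) : sD (shift ∘ d) + sS (shift ∘ d) ≤ sD d := by
  have h1 := sD_shift d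
  have h2 := sS_shift d
  omega

lemma mu_shift_iter_le (e : ℕ) (d : ι → WithBot ℕ) :
    sD (shift^[e] ∘ d) + sS (shift^[e] ∘ d) ≤ sD d + sS d := by
  induction e generalizing d with
  | zero => simp [Function.comp_def]
  | succ k ih =>
    have h1 : shift^[k + 1] ∘ d = shift^[k] ∘ (shift ∘ d) := by
      funext i
      exact Function.iterate_succ_apply shift k (d i)
    rw [h1]
    calc sD (shift^[k] ∘ (shift ∘ d)) + sS (shift^[k] ∘ (shift ∘ d))
        ≤ sD (shift ∘ d) + sS (shift ∘ d) := ih (shift ∘ d)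
      _ ≤ sD d := mu_shift_le d
      _ ≤ sD d + sS d := Nat.le_add_right _ _

lemma sS_eq_zero_iff (d : ι → WithBot ℕ) : sS d = 0 ↔ ∀ i, d i = ⊥ := by
  rw [sS, Finset.card_eq_zero, Finset.filter_eq_empty_iff]
  simp

lemma card_CT_of_bot {d : ι → WithBot ℕ} (h : ∀ i, d i = ⊥) :
    Nat.card (CT (F := F) d) = 0 := by
  have hempty : CT (F := F) d = ∅ := by
    rw [Set.eq_empty_iff_forall_notMem]
    rintro f ⟨hb, ⟨i0, hd, h0⟩, -⟩
    rw [h i0, degree_eq_bot] at hd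
    exact h0 hd
  rw [hempty]
  simp

lemma ff_of_bot {q : ℕ} {d : ι → WithBot ℕ} (h : ∀ i, d i = ⊥) : ff q d = 0 := by
  have hz : sZ d = 0 := by
    rw [sZ, Finset.card_eq_zero, Finset.filter_eq_empty_iff]
    intro i _
    rw [h i, ← coe_zero_eq]
    simp
  have ht : sT d = 0 := by
    rw [sT, Finset.card_eq_zero, Finset.filter_eq_empty_iff]
    intro i _
    rw [h i, one_le_iff]
    rintro ⟨m, hm, -⟩
    simp at hm
  rw [ff, hz, ht]
  simp

lemma card_BT_val (d : ι → WithBot ℕ) :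
    Nat.card (BT (F := F) d) + Fintype.card F ^ sD d
      = Fintype.card F ^ (sD d + sS d) := by
  classical
  set A : Set (ι → F[X]) := {f | ∀ i, f i ∈ bddP (d i)} with hA
  set L : Set (ι → F[X]) := {f | ∀ i, f i ∈ lowP (d i)} with hL
  have hLA : L ⊆ A := by
    intro f hf i
    exact (hf i).1
  have hBT : BT (F := F) d = A \ L := by
    ext f
    simp only [BT, hA, hL, Set.mem_setOf_eq, Set.mem_diff, bddP, lowP]
    constructor
    · rintro ⟨hb, i0, hd, h0⟩
      refine ⟨hb, fun hl => ?_⟩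
      exact (hl i0).2 ⟨hd, h0⟩
    · rintro ⟨hb, hl⟩
      refine ⟨hb, ?_⟩
      push_neg at hl
      obtain ⟨i0, hi0⟩ := hl
      obtain ⟨hd, h0⟩ := hi0 (hb i0)
      exact ⟨i0, hd, h0⟩
  have hAfin : A.Finite := finite_bddTuples d
  have hcardA : Nat.card A = Fintype.card F ^ (sD d + sS d) := by
    rw [hA]
    calc Nat.card ↥{f : ι → F[X] | ∀ i, f i ∈ bddP (d i)}
        = Nat.card {f : ι → F[X] // ∀ i, f i ∈ bddP (d i)} := rfl
      _ = ∏ i, Nat.card (bddP (F := F) (d i)) := card_piSet _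
      _ = ∏ i, cB (Fintype.card F) (d i) := Finset.prod_congr rfl fun i _ => card_bddP (d i)
      _ = Fintype.card F ^ (sD d + sS d) := prod_cB _ d
  have hcardL : Nat.card L = Fintype.card F ^ sD d := by
    rw [hL]
    calc Nat.card ↥{f : ι → F[X] | ∀ i, f i ∈ lowP (d i)}
        = Nat.card {f : ι → F[X] // ∀ i, f i ∈ lowP (d i)} := rfl
      _ = ∏ i, Nat.card (lowP (F := F) (d i)) := card_piSet _
      _ = ∏ i, cL (Fintype.card F) (d i) := Finset.prod_congr rfl fun i _ => card_lowP (d i)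
      _ = Fintype.card F ^ sD d := prod_cL _ d
  rw [hBT, ← hcardA, ← hcardL]
  rw [Nat.card_coe_set_eq, Nat.card_coe_set_eq, Nat.card_coe_set_eq]
  exact Set.ncard_diff_add_ncard_of_subset hLA hAfin

lemma card_CT_eq : ∀ (n : ℕ) (d : ι → WithBot ℕ), sD d + sS d ≤ n →
    Nat.card (CT (F := F) d) = ff (Fintype.card F) d := by
  have hq : 1 ≤ Fintype.card F := Fintype.card_pos
  intro n
  induction n with
  | zero =>
    intro d hd
    have h0 : sS d = 0 := by omega
    rw [sS_eq_zero_iff] at h0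
    rw [card_CT_of_bot h0, ff_of_bot h0]
  | succ n ih =>
    intro d hd
    rcases Nat.eq_zero_or_pos (sS d) with h0 | hpos
    · rw [sS_eq_zero_iff] at h0
      rw [card_CT_of_bot h0, ff_of_bot h0]
    · set K := sD d with hKdef
      have hK : ∀ i, d i ≤ ((K : ℕ) : WithBot ℕ) := d_le_sD d
      have hA := card_BT_eq (F := F) d K hK
      have hB := NUM hq K d hK
      have hC := card_BT_val (F := F) d
      have hIH : ∀ e, Nat.card (CT (F := F) (shift^[e + 1] ∘ d))
          = ff (Fintype.card F) (shift^[e + 1] ∘ d) := by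
        intro e
        apply ih
        have h1 : shift^[e + 1] ∘ d = shift^[e] ∘ (shift ∘ d) := by
          funext i
          exact Function.iterate_succ_apply shift e (d i)
        rw [h1]
        calc sD (shift^[e] ∘ (shift ∘ d)) + sS (shift^[e] ∘ (shift ∘ d))
            ≤ sD (shift ∘ d) + sS (shift ∘ d) := mu_shift_iter_le e (shift ∘ d)
          _ ≤ sD d := mu_shift_le d
          _ ≤ n := by omega
      rw [Finset.sum_range_succ'] at hA hB
      simp only [Function.iterate_zero, Function.comp_def, pow_zero, one_mul] at hA hB
      rw [show (fun x => id (d x)) = d from rfl] at hA hB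
      have hsum : ∑ e ∈ Finset.range K, Fintype.card F ^ (e + 1) *
            Nat.card (CT (F := F) (fun x => shift^[e + 1] (d x)))
          = ∑ e ∈ Finset.range K, Fintype.card F ^ (e + 1) *
            ff (Fintype.card F) (shift^[e + 1] ∘ d) := by
        refine Finset.sum_congr rfl fun e _ => ?_
        rw [show (fun x => shift^[e + 1] (d x)) = shift^[e + 1] ∘ d from rfl, hIH e]
      rw [hsum] at hA
      have hBB : ∑ e ∈ Finset.range K, Fintype.card F ^ (e + 1) *
            ff (Fintype.card F) (shift^[e + 1] ∘ d)
          = ∑ e ∈ Finset.range K, Fintype.card F ^ (e + 1) *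
            ff (Fintype.card F) (fun x => shift^[e + 1] (d x)) := rfl
      omega

end Main

section Form
variable {F : Type*} [Field F]

/-- homogenization of (the degree-`≤ dd` part of) a polynomial -/
noncomputable def toForm (dd : ℕ) (p : F[X]) : MvPolynomial (Fin 2) F :=
  ∑ j ∈ Finset.range (dd + 1),
    MvPolynomial.C (p.coeff j) * MvPolynomial.X 0 ^ j * MvPolynomial.X 1 ^ (dd - j)

/-- dehomogenization -/
noncomputable def toPoly : MvPolynomial (Fin 2) F →ₐ[F] F[X] :=
  MvPolynomial.aeval ![Polynomial.X, 1]

lemma toForm_isHomogeneous (dd : ℕ) (p : F[X]) : (toForm dd p).IsHomogeneous dd := by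
  apply MvPolynomial.IsHomogeneous.sum
  intro j hj
  rw [Finset.mem_range] at hj
  have h0 : (MvPolynomial.C (p.coeff j) : MvPolynomial (Fin 2) F).IsHomogeneous 0 :=
    MvPolynomial.isHomogeneous_C _ _
  have h1 : ((MvPolynomial.X 0 : MvPolynomial (Fin 2) F) ^ j).IsHomogeneous j := by
    simpa using (MvPolynomial.isHomogeneous_X F (0 : Fin 2)).pow j
  have h2 : ((MvPolynomial.X 1 : MvPolynomial (Fin 2) F) ^ (dd - j)).IsHomogeneous (dd - j) := by
    simpa using (MvPolynomial.isHomogeneous_X F (1 : Fin 2)).pow (dd - j)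
  have h3 := (h0.mul h1).mul h2
  rwa [show 0 + j + (dd - j) = dd by omega] at h3

lemma toPoly_toForm (dd : ℕ) (p : F[X]) (hp : p.degree ≤ (dd : WithBot ℕ)) :
    toPoly (toForm dd p) = p := by
  rw [toForm, map_sum]
  have h1 : ∀ j, toPoly (MvPolynomial.C (p.coeff j) * MvPolynomial.X 0 ^ j *
      MvPolynomial.X 1 ^ (dd - j) : MvPolynomial (Fin 2) F)
      = Polynomial.C (p.coeff j) * Polynomial.X ^ j := by
    intro j
    rw [toPoly]
    simp [MvPolynomial.aeval_X]
  rw [Finset.sum_congr rfl (fun j _ => h1 j)]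
  conv_rhs => rw [p.as_sum_range' (dd + 1) (by rwa [Nat.lt_succ_iff, natDegree_le_iff_degree_le])]
  exact Finset.sum_congr rfl (fun j _ => C_mul_X_pow_eq_monomial)

lemma fin2_eq (μ : Fin 2 →₀ ℕ) : μ = Finsupp.single 0 (μ 0) + Finsupp.single 1 (μ 1) := by
  ext a
  fin_cases a <;> simp [Finsupp.single_apply]

lemma monomial_eq_prod (μ : Fin 2 →₀ ℕ) (c : F) :
    (MvPolynomial.monomial μ c : MvPolynomial (Fin 2) F)
      = MvPolynomial.C c * MvPolynomial.X 0 ^ (μ 0) * MvPolynomial.X 1 ^ (μ 1) := by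
  rw [MvPolynomial.monomial_eq]
  rw [fin2_eq μ]
  rw [Finsupp.prod_add_index (by simp) (by intros; rw [pow_add])]
  simp [Finsupp.prod_single_index, mul_assoc]

lemma toPoly_monomial (μ : Fin 2 →₀ ℕ) (c : F) :
    toPoly (MvPolynomial.monomial μ c : MvPolynomial (Fin 2) F)
      = Polynomial.C c * Polynomial.X ^ (μ 0) := by
  rw [monomial_eq_prod, toPoly]
  simp [MvPolynomial.aeval_X]

lemma toForm_monomial {dd : ℕ} (μ : Fin 2 →₀ ℕ) (c : F) (hμ : μ 0 + μ 1 = dd) :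
    toForm dd (Polynomial.C c * Polynomial.X ^ (μ 0)) = MvPolynomial.monomial μ c := by
  rw [toForm]
  rw [Finset.sum_eq_single (μ 0)]
  · rw [coeff_C_mul, coeff_X_pow, if_pos rfl, mul_one, monomial_eq_prod,
      show dd - μ 0 = μ 1 by omega]
  · intro j hj hne
    rw [coeff_C_mul, coeff_X_pow, if_neg hne, mul_zero, map_zero, zero_mul, zero_mul]
  · intro h
    exact absurd (Finset.mem_range.mpr (by omega)) h

noncomputable def toFormHom (dd : ℕ) : F[X] →+ MvPolynomial (Fin 2) F where
  toFun := toForm dd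
  map_zero' := by simp [toForm]
  map_add' p q := by
    simp only [toForm, coeff_add, map_add, add_mul]
    rw [Finset.sum_add_distrib]

lemma weight_one_fin2 (μ : Fin 2 →₀ ℕ) :
    (Finsupp.weight (1 : Fin 2 → ℕ)) μ = μ 0 + μ 1 := by
  rw [Finsupp.weight_apply, Finsupp.sum_fintype _ _ (by simp)]
  simp [Fin.sum_univ_two]

lemma toForm_toPoly {dd : ℕ} {f : MvPolynomial (Fin 2) F} (hf : f.IsHomogeneous dd) :
    toForm dd (toPoly f) = f := by
  have key : toFormHom (F := F) dd (toPoly f) = f := by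
    conv_lhs => rw [← MvPolynomial.support_sum_monomial_coeff f]
    conv_rhs => rw [← MvPolynomial.support_sum_monomial_coeff f]
    rw [map_sum, map_sum]
    refine Finset.sum_congr rfl fun μ hμ => ?_
    have hw : μ 0 + μ 1 = dd := by
      have h1 := hf (MvPolynomial.mem_support_iff.mp hμ)
      rwa [weight_one_fin2] at h1
    show toForm dd (toPoly (MvPolynomial.monomial μ (MvPolynomial.coeff μ f))) = _
    rw [toPoly_monomial, toForm_monomial μ _ hw]
  exact key

lemma degree_toPoly_le {dd : ℕ} {f : MvPolynomial (Fin 2) F} (hf : f.IsHomogeneous dd) :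
    (toPoly f).degree ≤ (dd : WithBot ℕ) := by
  conv_lhs => rw [← MvPolynomial.support_sum_monomial_coeff f]
  rw [map_sum]
  refine le_trans (degree_sum_le _ _) ?_
  rw [Finset.sup_le_iff]
  intro μ hμ
  rw [toPoly_monomial]
  refine le_trans (degree_C_mul_X_pow_le _ _) ?_
  have hw : μ 0 + μ 1 = dd := by
    have h1 := hf (MvPolynomial.mem_support_iff.mp hμ)
    rwa [weight_one_fin2] at h1
  rw [Nat.cast_withBot, Nat.cast_withBot, WithBot.coe_le_coe]
  omega


section Eval
variable {F : Type*} [Field F] {K : Type*} [Field K] [Algebra F K]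

lemma aeval_toForm (dd : ℕ) (p : F[X]) (a b : K) :
    MvPolynomial.aeval ![a, b] (toForm dd p)
      = ∑ j ∈ Finset.range (dd + 1), algebraMap F K (p.coeff j) * a ^ j * b ^ (dd - j) := by
  rw [toForm, map_sum]
  refine Finset.sum_congr rfl fun j _ => ?_
  simp [MvPolynomial.aeval_X]

lemma aeval_toForm_of_ne {b : K} (hb : b ≠ 0) {dd : ℕ} {p : F[X]}
    (hdeg : p.degree ≤ (dd : WithBot ℕ)) (a : K) :
    MvPolynomial.aeval ![a, b] (toForm dd p)
      = b ^ dd * (p.map (algebraMap F K)).eval (a * b⁻¹) := by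
  rw [aeval_toForm, Polynomial.eval_eq_sum_range' (n := dd + 1)
    (by rw [natDegree_map]; rw [Nat.lt_succ_iff, natDegree_le_iff_degree_le]; exact hdeg),
    Finset.mul_sum]
  refine Finset.sum_congr rfl fun j hj => ?_
  rw [Finset.mem_range, Nat.lt_succ_iff] at hj
  rw [coeff_map]
  have hpow : b ^ (dd - j) = b ^ dd * (b⁻¹) ^ j := by
    rw [inv_pow, eq_comm, mul_inv_eq_iff_eq_mul₀ (pow_ne_zero _ hb), ← pow_add]
    congr 1
    omega
  rw [hpow, mul_pow]
  ring

lemma aeval_toForm_at_inf {dd : ℕ} (p : F[X]) (a : K) :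
    MvPolynomial.aeval ![a, (0 : K)] (toForm dd p)
      = algebraMap F K (p.coeff dd) * a ^ dd := by
  rw [aeval_toForm, Finset.sum_eq_single dd]
  · rw [Nat.sub_self, pow_zero, mul_one]
  · intro j hj hne
    rw [Finset.mem_range, Nat.lt_succ_iff] at hj
    rw [zero_pow (by omega : dd - j ≠ 0), mul_zero]
  · intro h
    exact absurd (Finset.mem_range.mpr (by omega)) h

end Eval

section Cond
variable {F : Type*} [Field F] [DecidableEq F] {K : Type*} [Field K] [Algebra F K]
  [IsAlgClosed K] {ι : Type*} [Fintype ι] [Nonempty ι]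

lemma cond_iff (d : ι → ℕ) (p : ι → F[X])
    (hdeg : ∀ i, (p i).degree ≤ ((d i : ℕ) : WithBot ℕ)) :
    (∀ a b : K, ¬(a = 0 ∧ b = 0) →
      ∃ i, MvPolynomial.aeval ![a, b] (toForm (d i) (p i)) ≠ 0)
    ↔ ((∃ i, (p i).degree = ((d i : ℕ) : WithBot ℕ) ∧ p i ≠ 0) ∧
        Finset.univ.gcd p = 1) := by
  constructor
  · intro h
    have hatt : ∃ i, (p i).degree = ((d i : ℕ) : WithBot ℕ) ∧ p i ≠ 0 := by
      obtain ⟨i, hi⟩ := h 1 0 (by simp)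
      rw [aeval_toForm_at_inf] at hi
      have hc : (p i).coeff (d i) ≠ 0 := by
        intro h0
        rw [h0, map_zero, zero_mul] at hi
        exact hi rfl
      refine ⟨i, le_antisymm (hdeg i) (le_degree_of_ne_zero hc), ?_⟩
      intro h0
      rw [h0, coeff_zero] at hc
      exact hc rfl
    refine ⟨hatt, ?_⟩
    obtain ⟨i0, hi0d, hi0⟩ := hatt
    set G := Finset.univ.gcd p with hG
    have hGne : G ≠ 0 := by
      intro h0
      rw [hG, Finset.gcd_eq_zero_iff] at h0
      exact hi0 (h0 i0 (Finset.mem_univ _))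
    have hGmon : G.Monic := by
      have := monic_normalize hGne
      rwa [hG, Finset.normalize_gcd] at this
    rcases Nat.eq_zero_or_pos G.natDegree with h0 | hpos
    · rwa [← hGmon.natDegree_eq_zero]
    · exfalso
      have hdne : (G.map (algebraMap F K)).degree ≠ 0 := by
        rw [degree_map, degree_eq_natDegree hGne]
        intro hcon
        rw [show (0 : WithBot ℕ) = ((0 : ℕ) : WithBot ℕ) by simp,
          Nat.cast_withBot, Nat.cast_withBot, WithBot.coe_inj] at hcon
        omega
      obtain ⟨r, hr⟩ := IsAlgClosed.exists_root _ hdne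
      obtain ⟨i, hi⟩ := h r 1 (by simp)
      apply hi
      rw [aeval_toForm_of_ne one_ne_zero (hdeg i) r]
      have hzero : ((p i).map (algebraMap F K)).eval (r * 1⁻¹) = 0 := by
        rw [inv_one, mul_one]
        refine eval_eq_zero_of_dvd_of_eval_eq_zero ?_ hr
        exact Polynomial.map_dvd _ (Finset.gcd_dvd (Finset.mem_univ i))
      rw [hzero, mul_zero]
  · rintro ⟨⟨i0, hi0d, hi0⟩, hgcd⟩ a b hab
    by_cases hb : b = 0
    · subst hb
      have ha : a ≠ 0 := fun h0 => hab ⟨h0, rfl⟩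
      refine ⟨i0, ?_⟩
      rw [aeval_toForm_at_inf]
      have hnat : (p i0).natDegree = d i0 := natDegree_eq_of_degree_eq_some hi0d
      have hc : (p i0).coeff (d i0) ≠ 0 := by
        rw [← hnat]
        exact fun h0 => hi0 (leadingCoeff_eq_zero.mp h0)
      exact mul_ne_zero ((map_ne_zero_iff _ (RingHom.injective (algebraMap F K))).mpr hc)
        (pow_ne_zero _ ha)
    · obtain ⟨i, hi⟩ := no_common_root hgcd (algebraMap F K) (a * b⁻¹)
      refine ⟨i, ?_⟩
      rw [aeval_toForm_of_ne hb (hdeg i) a]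
      exact mul_ne_zero (pow_ne_zero _ hb) hi

end Cond


end Form

section Final
variable {F : Type*} [Field F] [Fintype F] [DecidableEq F]

theorem final_count (N : ℕ) (hN : 1 ≤ N) (d : Fin (N + 1) → ℕ) (hd : ∀ i, 1 ≤ d i) :
    Nat.card {f : Fin (N + 1) → MvPolynomial (Fin 2) F //
        (∀ i, (f i).IsHomogeneous (d i)) ∧
        (∀ a b : AlgebraicClosure F, ¬(a = 0 ∧ b = 0) →
          ∃ i, (MvPolynomial.aeval ![a, b]) (f i) ≠ 0)}
      = (Fintype.card F ^ (N + 1) - 1) *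
        (Fintype.card F ^ (∑ i, d i) - Fintype.card F ^ ((∑ i, d i) - N)) := by
  set q := Fintype.card F with hq
  set dc : Fin (N + 1) → WithBot ℕ := fun i => ((d i : ℕ) : WithBot ℕ) with hdc
  -- the bijection with `CT dc`
  have hmem : ∀ p : ↥(CT (F := F) dc), (∀ i, (toForm (d i) (p.1 i)).IsHomogeneous (d i)) ∧
      (∀ a b : AlgebraicClosure F, ¬(a = 0 ∧ b = 0) →
        ∃ i, (MvPolynomial.aeval ![a, b]) (toForm (d i) (p.1 i)) ≠ 0) := by
    rintro ⟨p, hb, hatt, hgcd⟩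
    refine ⟨fun i => toForm_isHomogeneous (d i) (p i), ?_⟩
    rw [cond_iff d p hb]
    exact ⟨hatt, hgcd⟩
  set Θ : ↥(CT (F := F) dc) → {f : Fin (N + 1) → MvPolynomial (Fin 2) F //
      (∀ i, (f i).IsHomogeneous (d i)) ∧
      (∀ a b : AlgebraicClosure F, ¬(a = 0 ∧ b = 0) →
        ∃ i, (MvPolynomial.aeval ![a, b]) (f i) ≠ 0)} :=
    fun p => ⟨fun i => toForm (d i) (p.1 i), hmem p⟩ with hΘ
  have hbij : Function.Bijective Θ := by
    constructor
    · rintro ⟨p, hp⟩ ⟨p', hp'⟩ hEq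
      simp only [hΘ, Subtype.mk.injEq] at hEq
      apply Subtype.ext
      funext i
      have := congrFun hEq i
      calc p i = toPoly (toForm (d i) (p i)) := (toPoly_toForm (d i) (p i) (hp.1 i)).symm
        _ = toPoly (toForm (d i) (p' i)) := by rw [this]
        _ = p' i := toPoly_toForm (d i) (p' i) (hp'.1 i)
    · rintro ⟨f, hhom, heval⟩
      set p : Fin (N + 1) → F[X] := fun i => toPoly (f i) with hp
      have hdeg : ∀ i, (p i).degree ≤ dc i := fun i => degree_toPoly_le (hhom i)
      have hform : ∀ i, toForm (d i) (p i) = f i := fun i => toForm_toPoly (hhom i)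
      have heval' : ∀ a b : AlgebraicClosure F, ¬(a = 0 ∧ b = 0) →
          ∃ i, (MvPolynomial.aeval ![a, b]) (toForm (d i) (p i)) ≠ 0 := by
        intro a b hab
        obtain ⟨i, hi⟩ := heval a b hab
        exact ⟨i, by rwa [hform i]⟩
      rw [cond_iff d p hdeg] at heval'
      refine ⟨⟨p, hdeg, heval'.1, heval'.2⟩, ?_⟩
      apply Subtype.ext
      funext i
      exact hform i
  rw [← Nat.card_eq_of_bijective Θ hbij]
  rw [card_CT_eq (sD dc + sS dc) dc le_rfl]
  -- compute the statistics
  have hsS : sS dc = N + 1 := by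
    rw [sS, Finset.filter_true_of_mem, Finset.card_univ, Fintype.card_fin]
    intro i _
    show ((d i : ℕ) : WithBot ℕ) ≠ ⊥
    rw [Nat.cast_withBot]
    simp
  have hsT : sT dc = N + 1 := by
    rw [sT, Finset.filter_true_of_mem, Finset.card_univ, Fintype.card_fin]
    intro i _
    show (1 : WithBot ℕ) ≤ ((d i : ℕ) : WithBot ℕ)
    rw [one_le_iff]
    exact ⟨d i, rfl, hd i⟩
  have hsZ : sZ dc = 0 := by
    have := sZ_add_sT dc
    omega
  have hsD : sD dc = ∑ i, d i := by
    rw [sD]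
    refine Finset.sum_congr rfl fun i _ => ?_
    show ((d i : ℕ) : WithBot ℕ).unbotD 0 = d i
    rw [Nat.cast_withBot]
    simp
  have hDge : N + 1 ≤ ∑ i, d i := by
    calc N + 1 = ∑ _i : Fin (N + 1), 1 := by
          rw [Finset.sum_const, Finset.card_univ, Fintype.card_fin, smul_eq_mul, mul_one]
      _ ≤ ∑ i, d i := Finset.sum_le_sum fun i _ => hd i
  rw [ff, hsZ, hsT, hsD, pow_zero, Nat.sub_self, zero_mul, zero_add,
    show (∑ i, d i) - (N + 1) + 1 = (∑ i, d i) - N from by omega]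

end Final

end Stmt10

/-- The number of `(N+1)`-tuples of binary forms over `F_q` of degrees `d_0,…,d_N ≥ 1`
(possibly zero) with no common zero on `P^1` over the algebraic closure equals
`(q^{N+1} − 1)·(q^{d_0+⋯+d_N} − q^{d_0+⋯+d_N−N})`. -/
theorem stmt_10 (F : Type*) [Field F] [Fintype F] (N : ℕ) (hN : 1 ≤ N)
    (d : Fin (N + 1) → ℕ) (hd : ∀ i, 1 ≤ d i) :
    Nat.card {f : Fin (N + 1) → MvPolynomial (Fin 2) F //
        (∀ i, (f i).IsHomogeneous (d i)) ∧
        (∀ a b : AlgebraicClosure F, ¬(a = 0 ∧ b = 0) →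
          ∃ i, (MvPolynomial.aeval ![a, b]) (f i) ≠ 0)}
      = (Fintype.card F ^ (N + 1) - 1) *
        (Fintype.card F ^ (∑ i, d i) - Fintype.card F ^ ((∑ i, d i) - N)) := by
  classical
  exact Stmt10.final_count N hN d hd
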